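/- arXiv:1302.5382 — 6 statements merged into one kernel-verified Lean document; each statement's English description precedes it below -/
import Mathlib

section
/- Let f : (Fin n → Bool) → ℂ² and suppose every variable v_i (i : Fin n) is r-linear for f with angle θ_i. Then for every assignment U : Fin n → Bool, f(U) = R_x(Σ_{i : U i = true} θ_i) · f(const false); in particular f is determined by its value at the all-false assignment together with one rotation angle per variable. -/
open Matrix

/-- The rotation around the x axis: rows (cos(θ/2), −i·sin(θ/2)), (−i·sin(θ/2), cos(θ/2)). -/
noncomputable def Rx (θ : ℝ) : Matrix (Fin 2) (Fin 2) ℂ :=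
  !![(Real.cos (θ / 2) : ℂ), -Complex.I * Real.sin (θ / 2);
     -Complex.I * Real.sin (θ / 2), (Real.cos (θ / 2) : ℂ)]

/-- The basis state 0̂ = (1, 0). -/
def ket0 : Fin 2 → ℂ := ![1, 0]

/-- The basis state 1̂ = (0, −i). -/
def ket1 : Fin 2 → ℂ := ![0, -Complex.I]

/-- Embedding of a Boolean into the basis {0̂, 1̂}. -/
def emb (b : Bool) : Fin 2 → ℂ := if b then ket1 else ket0

/-- Controlled rotation: `cop a θ v = Rx θ · v` if `a` is true, else `v`. -/
noncomputable def cop (a : Bool) (θ : ℝ) (v : Fin 2 → ℂ) : Fin 2 → ℂ :=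
  if a then (Rx θ).mulVec v else v

lemma Rx_zero : Rx 0 = 1 := by
  ext i j
  fin_cases i <;> fin_cases j <;> simp [Rx, Matrix.one_apply]

lemma Rx_add (a b : ℝ) : Rx (a + b) = Rx a * Rx b := by
  ext i j
  fin_cases i <;> fin_cases j <;>
    · simp [Rx, Matrix.mul_apply, Fin.sum_univ_two, add_div, Complex.ext_iff,
        Real.cos_add, Real.sin_add]
      ring_nf
      simp [Real.cos_add, Real.sin_add]
      try ring

theorem stmt_7 (n : ℕ) (f : (Fin n → Bool) → (Fin 2 → ℂ)) (θ : Fin n → ℝ)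
    (hlin : ∀ (i : Fin n) (U : Fin n → Bool),
      f (Function.update U i true) = (Rx (θ i)).mulVec (f (Function.update U i false))) :
    ∀ U : Fin n → Bool,
      f U = (Rx (∑ i ∈ Finset.univ.filter (fun i => U i = true), θ i)).mulVec
        (f (fun _ => false)) := by
  suffices h : ∀ (k : ℕ) (U : Fin n → Bool),
      (Finset.univ.filter (fun i => U i = true)).card = k →
      f U = (Rx (∑ i ∈ Finset.univ.filter (fun i => U i = true), θ i)).mulVec
        (f (fun _ => false)) by
    intro U; exact h _ U rfl
  intro k
  induction k with
  | zero =>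
    intro U hU
    have hU' : U = fun _ => false := by
      funext j
      by_contra hj
      have hj' : U j = true := by
        cases hUj : U j
        · exact absurd hUj hj
        · rfl
      have : j ∈ Finset.univ.filter (fun i => U i = true) := by simp [hj']
      rw [Finset.card_eq_zero] at hU
      simp [hU] at this
    subst hU'
    simp [Rx_zero]
  | succ k ih =>
    intro U hU
    have hne : (Finset.univ.filter (fun i => U i = true)).Nonempty := by
      rw [← Finset.card_pos, hU]; omega
    obtain ⟨i, hi⟩ := hne
    have hiU : U i = true := by simpa using hi
    set U' := Function.update U i false with hU'def
    have h1 : U = Function.update U' i true := by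
      funext j
      by_cases hj : j = i
      · subst hj; simp [hU'def, hiU]
      · simp [hU'def, Function.update_of_ne hj]
    have h2 : Function.update U' i false = U' := by
      funext j
      by_cases hj : j = i
      · subst hj; simp [hU'def]
      · simp [Function.update_of_ne hj]
    have hfilter : Finset.univ.filter (fun j => U' j = true)
        = (Finset.univ.filter (fun j => U j = true)).erase i := by
      ext j
      by_cases hj : j = i
      · subst hj; simp [hU'def]
      · simp [hU'def, Function.update_of_ne hj, hj]
    have hcard : (Finset.univ.filter (fun j => U' j = true)).card = k := by
      rw [hfilter, Finset.card_erase_of_mem hi, hU]; omega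
    have step : f U = (Rx (θ i)).mulVec (f U') := by
      rw [h1, hlin i U', h2]
    have hsum : (∑ j ∈ Finset.univ.filter (fun j => U j = true), θ j)
        = θ i + ∑ j ∈ Finset.univ.filter (fun j => U' j = true), θ j := by
      rw [hfilter, Finset.add_sum_erase _ _ hi]
    rw [step, ih U' hcard, hsum, Rx_add, Matrix.mulVec_mulVec]
end

section
/- (Theorem 1, part II.) Let f : (Fin n → Bool) → ℂ², let k be an index, let α₁ ∈ ℝ, and define g : (Fin n → Bool) → Bool by g(U) = true iff f_{v_k}(U) = R_x(α₁)·f_{v̄_k}(U), and g₁(U) := (U k) XOR g(U). If an index i ≠ k is r-linear for f with some angle θ, then g and g₁ are invariant with respect to v_i: for every assignment U, g(U with coordinate i set to true) = g(U with coordinate i set to false), and likewise for g₁. -/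
open Matrix

lemma Rx_neg_mul (θ : ℝ) : Rx (-θ) * Rx θ = 1 := by
  ext x y
  fin_cases x <;> fin_cases y <;>
    simp [Rx, Matrix.mul_apply, Fin.sum_univ_two, Matrix.one_apply,
      Real.cos_neg, Real.sin_neg, neg_div] <;>
    first
      | linear_combination Complex.sin_sq_add_cos_sq ((θ:ℂ)/2) -
          (Complex.sin ((θ:ℂ)/2))^2 * Complex.I_sq
      | ring

lemma Rx_mulVec_inj (θ : ℝ) {v w : Fin 2 → ℂ}
    (h : (Rx θ).mulVec v = (Rx θ).mulVec w) : v = w := by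
  have := congrArg (fun x => (Rx (-θ)).mulVec x) h
  simpa only [Matrix.mulVec_mulVec, Rx_neg_mul, Matrix.one_mulVec] using this

lemma Rx_mul_comm (a b : ℝ) : Rx a * Rx b = Rx b * Rx a := by
  ext x y
  fin_cases x <;> fin_cases y <;>
    simp [Rx, Matrix.mul_apply, Fin.sum_univ_two] <;> ring

theorem stmt_8 (n : ℕ) (f : (Fin n → Bool) → (Fin 2 → ℂ)) (k : Fin n) (α₁ : ℝ)
    (g g₁ : (Fin n → Bool) → Bool)
    (hg : ∀ U, g U = true ↔
      f (Function.update U k true) = (Rx α₁).mulVec (f (Function.update U k false)))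
    (hg₁ : ∀ U, g₁ U = xor (U k) (g U))
    (i : Fin n) (hik : i ≠ k) (θ : ℝ)
    (hlin : ∀ U : Fin n → Bool,
      f (Function.update U i true) = (Rx θ).mulVec (f (Function.update U i false))) :
    (∀ U : Fin n → Bool,
        g (Function.update U i true) = g (Function.update U i false)) ∧
    (∀ U : Fin n → Bool,
        g₁ (Function.update U i true) = g₁ (Function.update U i false)) := by
  have key : ∀ U : Fin n → Bool,
      g (Function.update U i true) = g (Function.update U i false) := by
    intro U
    have hA := hg (Function.update U i true)
    have hB := hg (Function.update U i false)
    have cond : (f (Function.update (Function.update U i true) k true) =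
          (Rx α₁).mulVec (f (Function.update (Function.update U i true) k false)))
        ↔ (f (Function.update (Function.update U i false) k true) =
          (Rx α₁).mulVec (f (Function.update (Function.update U i false) k false))) := by
      simp only [Function.update_comm hik]
      rw [hlin (Function.update U k true), hlin (Function.update U k false)]
      constructor
      · intro h
        apply Rx_mulVec_inj θ
        rw [h, Matrix.mulVec_mulVec, Matrix.mulVec_mulVec, Rx_mul_comm]
      · intro h
        rw [h, Matrix.mulVec_mulVec, Matrix.mulVec_mulVec, Rx_mul_comm]
    have : (g (Function.update U i true) = true) ↔
        (g (Function.update U i false) = true) := (hA.trans cond).trans hB.symm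
    exact Bool.coe_iff_coe.mp this
  refine ⟨key, fun U => ?_⟩
  rw [hg₁, hg₁, key U, Function.update_of_ne hik.symm, Function.update_of_ne hik.symm]
end

section
/- (Theorem 1, part IV.) Let f : (Fin n → Bool) → ℂ², let k be an index, let α₁, γ ∈ ℝ, define g(U) = true iff f_{v_k}(U) = R_x(α₁)·f_{v̄_k}(U), g₁(U) := (U k) XOR g(U), and h(U) := cop(g₁(U), −γ, f(U)). If an index i ≠ k is r-linear for f with angle θ_i, then i is r-linear for h with the same angle θ_i: for every assignment U, h_{v_i}(U) = R_x(θ_i)·h_{v̄_i}(U). -/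
open Matrix

lemma Rx_mul (a b : ℝ) : Rx a * Rx b = Rx (a + b) := by
  have hI : Complex.I * Complex.I = -1 := Complex.I_mul_I
  ext i j
  fin_cases i <;> fin_cases j <;>
    simp [Rx, Matrix.mul_apply, Fin.sum_univ_two,
      show (a+b)/2 = a/2 + b/2 by ring, Real.cos_add, Real.sin_add] <;>
    (ring_nf; try simp [Complex.I_sq]; try ring)

lemma Rx_mulVec_injective (a : ℝ) : Function.Injective (Rx a).mulVec := by
  intro u v huv
  have h : (Rx (-a)).mulVec ((Rx a).mulVec u) = (Rx (-a)).mulVec ((Rx a).mulVec v) := by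
    rw [huv]
  simpa only [Matrix.mulVec_mulVec, Rx_mul, neg_add_cancel, Rx_zero, Matrix.one_mulVec] using h

lemma Rx_mulVec_comm (a b : ℝ) (v : Fin 2 → ℂ) :
    (Rx a).mulVec ((Rx b).mulVec v) = (Rx b).mulVec ((Rx a).mulVec v) := by
  rw [Matrix.mulVec_mulVec, Matrix.mulVec_mulVec, Rx_mul, Rx_mul, add_comm]

theorem stmt_10 (n : ℕ) (f : (Fin n → Bool) → (Fin 2 → ℂ)) (k : Fin n) (α₁ γ : ℝ)
    (g g₁ : (Fin n → Bool) → Bool) (h : (Fin n → Bool) → (Fin 2 → ℂ))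
    (hg : ∀ U, g U = true ↔
      f (Function.update U k true) = (Rx α₁).mulVec (f (Function.update U k false)))
    (hg₁ : ∀ U, g₁ U = xor (U k) (g U))
    (hh : ∀ U, h U = cop (g₁ U) (-γ) (f U))
    (i : Fin n) (hik : i ≠ k) (θ : ℝ)
    (hlin : ∀ U : Fin n → Bool,
      f (Function.update U i true) = (Rx θ).mulVec (f (Function.update U i false))) :
    ∀ U : Fin n → Bool,
      h (Function.update U i true) = (Rx θ).mulVec (h (Function.update U i false)) := by
  intro U
  -- g is the same on both updates
  have hcomm : ∀ (b c : Bool), Function.update (Function.update U i b) k c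
      = Function.update (Function.update U k c) i b := by
    intro b c
    exact Function.update_comm hik b c U
  have hgsame : g (Function.update U i true) = g (Function.update U i false) := by
    have h1 : g (Function.update U i true) = true ↔ g (Function.update U i false) = true := by
      rw [hg, hg]
      rw [hcomm true true, hcomm true false, hcomm false true, hcomm false false, hlin, hlin]
      constructor
      · intro heq
        exact Rx_mulVec_injective θ (by rw [heq, Rx_mulVec_comm])
      · intro heq
        rw [heq, Rx_mulVec_comm]
    cases hT : g (Function.update U i true) <;> cases hF : g (Function.update U i false) <;>
      simp_all
  have hg1same : g₁ (Function.update U i true) = g₁ (Function.update U i false) := by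
    rw [hg₁, hg₁, hgsame, Function.update_of_ne (Ne.symm hik), Function.update_of_ne (Ne.symm hik)]
  rw [hh, hh, hlin, hg1same]
  cases g₁ (Function.update U i false) with
  | false => simp [cop]
  | true =>
      simp only [cop, if_pos, Matrix.mulVec_mulVec]
      rw [Rx_mul, Rx_mul, add_comm]
end

section
/- (Theorem 1, part V.) Let f : (Fin n → Bool) → ℂ², let k be an index, and let α₁, α₂, …, α_m be real numbers (m ≥ 2) such that for every assignment U there exists j ∈ {1,…,m} with f_{v_k}(U) = R_x(α_j)·f_{v̄_k}(U). Define g(U) = true iff f_{v_k}(U) = R_x(α₁)·f_{v̄_k}(U), g₁(U) := (U k) XOR g(U), γ := (α₂ − α₁)/2, and h(U) := cop(g₁(U), −γ, f(U)). Then for every assignment U there exists β in the set {(α₁+α₂)/2} ∪ {α_j − γ : 3 ≤ j ≤ m} (a set of at most m−1 angles) such that h_{v_k}(U) = R_x(β)·h_{v̄_k}(U); hence the degree of r-nonlinearity of v_k in h is at most m−2. -/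
open Matrix

lemma Rx_mulVec_mulVec (a b : ℝ) (v : Fin 2 → ℂ) :
    (Rx a).mulVec ((Rx b).mulVec v) = (Rx (a + b)).mulVec v := by
  rw [← Rx_mul, ← Matrix.mulVec_mulVec]

theorem stmt_12 (n : ℕ) (f : (Fin n → Bool) → (Fin 2 → ℂ)) (k : Fin n)
    (m : ℕ) (hm : 2 ≤ m) (α : Fin m → ℝ)
    (hcover : ∀ U : Fin n → Bool, ∃ j : Fin m,
      f (Function.update U k true) = (Rx (α j)).mulVec (f (Function.update U k false)))
    (g g₁ : (Fin n → Bool) → Bool) (γ : ℝ) (h : (Fin n → Bool) → (Fin 2 → ℂ))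
    (hg : ∀ U, g U = true ↔
      f (Function.update U k true) = (Rx (α ⟨0, by omega⟩)).mulVec
        (f (Function.update U k false)))
    (hg₁ : ∀ U, g₁ U = xor (U k) (g U))
    (hγ : γ = (α ⟨1, by omega⟩ - α ⟨0, by omega⟩) / 2)
    (hh : ∀ U, h U = cop (g₁ U) (-γ) (f U)) :
    ∀ U : Fin n → Bool, ∃ β : ℝ,
      (β = (α ⟨0, by omega⟩ + α ⟨1, by omega⟩) / 2 ∨
        ∃ j : Fin m, 2 ≤ (j : ℕ) ∧ β = α j - γ) ∧
      h (Function.update U k true) = (Rx β).mulVec (h (Function.update U k false)) := by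
  intro U
  set U₀ := Function.update U k false with hU0
  set U₁ := Function.update U k true with hU1
  have e10 : Function.update U₁ k false = U₀ := by
    simp [hU0, hU1, Function.update_idem]
  have e11 : Function.update U₁ k true = U₁ := by
    simp [hU1, Function.update_idem]
  have e00 : Function.update U₀ k false = U₀ := by
    simp [hU0, Function.update_idem]
  have e01 : Function.update U₀ k true = U₁ := by
    simp [hU0, hU1, Function.update_idem]
  have hUk1 : U₁ k = true := by simp [hU1]
  have hUk0 : U₀ k = false := by simp [hU0]
  have hgg : g U₁ = g U₀ := by
    by_cases hc : f U₁ = (Rx (α ⟨0, by omega⟩)).mulVec (f U₀)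
    · have h1 : g U₁ = true := (hg U₁).2 (by rw [e11, e10]; exact hc)
      have h0 : g U₀ = true := (hg U₀).2 (by rw [e01, e00]; exact hc)
      rw [h1, h0]
    · have h1 : g U₁ = false := by
        rw [← Bool.not_eq_true]; intro hx
        exact hc (by have := (hg U₁).1 hx; rwa [e11, e10] at this)
      have h0 : g U₀ = false := by
        rw [← Bool.not_eq_true]; intro hx
        exact hc (by have := (hg U₀).1 hx; rwa [e01, e00] at this)
      rw [h1, h0]
  by_cases hgt : g U₀ = true
  · -- f U₁ = Rx α₀ (f U₀); g₁ U₁ = false, g₁ U₀ = true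
    have hf : f U₁ = (Rx (α ⟨0, by omega⟩)).mulVec (f U₀) := by
      have := (hg U₀).1 hgt; rwa [e01, e00] at this
    refine ⟨(α ⟨0, by omega⟩ + α ⟨1, by omega⟩) / 2, Or.inl rfl, ?_⟩
    have hh1 : h U₁ = f U₁ := by
      rw [hh U₁, hg₁ U₁, hUk1, hgg, hgt]; simp [cop]
    have hh0 : h U₀ = (Rx (-γ)).mulVec (f U₀) := by
      rw [hh U₀, hg₁ U₀, hUk0, hgt]; simp [cop]
    have hang : (α ⟨0, by omega⟩ + α ⟨1, by omega⟩) / 2 + -γ = α ⟨0, by omega⟩ := by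
      rw [hγ]; ring
    rw [hh1, hh0, Rx_mulVec_mulVec, hang, hf]
  · -- g false
    have hgf : g U₀ = false := by simpa using hgt
    obtain ⟨j, hj⟩ := hcover U₁
    rw [e11, e10] at hj
    have hj0 : (j : ℕ) ≠ 0 := by
      intro h0
      apply hgt
      have hje : j = ⟨0, by omega⟩ := Fin.ext h0
      exact (hg U₀).2 (by rw [e01, e00]; exact hje ▸ hj)
    have hh1 : h U₁ = (Rx (-γ)).mulVec (f U₁) := by
      rw [hh U₁, hg₁ U₁, hUk1, hgg, hgf]; simp [cop]
    have hh0 : h U₀ = f U₀ := by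
      rw [hh U₀, hg₁ U₀, hUk0, hgf]; simp [cop]
    rcases Nat.lt_or_ge (j : ℕ) 2 with hj2 | hj2
    · -- j = 1
      have hje : j = ⟨1, by omega⟩ := Fin.ext (by simp; omega)
      rw [hje] at hj
      refine ⟨(α ⟨0, by omega⟩ + α ⟨1, by omega⟩) / 2, Or.inl rfl, ?_⟩
      have hang : -γ + α ⟨1, by omega⟩ = (α ⟨0, by omega⟩ + α ⟨1, by omega⟩) / 2 := by
        rw [hγ]; ring
      rw [hh1, hh0, hj, Rx_mulVec_mulVec, hang]
    · refine ⟨α j - γ, Or.inr ⟨j, hj2, rfl⟩, ?_⟩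
      have hang : -γ + α j = α j - γ := by ring
      rw [hh1, hh0, hj, Rx_mulVec_mulVec, hang]
end

section
/- Let n ≥ 1 and let a_i, b_i ∈ {0,1} for i = 0,…,n−1 be the bits of A = Σ_{i<n} 2^i a_i and B = Σ_{i<n} 2^i b_i. Let s_i ∈ {0,1} be the bits of (A+B) mod 2^n and let c = 1 if A + B ≥ 2^n and c = 0 otherwise. Then Σ_{i<n} (π/2^{n−i})·(a_i + b_i − s_i) = π·c; consequently, by the cascade-evaluation rule, the carry-output cascade of the paper's n-qubit ripple adder, which applies to the ancilla 0̂ the controlled rotations by angles π/2^{n−i} with controls a_i and b_i followed by controlled rotations by angles −π/2^{n−i} with controls s_i, yields exactly R_x(π·c)·0̂ = emb(c). -/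
open Matrix

lemma sum_two_pow (n : ℕ) : ∑ i ∈ Finset.range n, 2 ^ i = 2 ^ n - 1 := by
  induction n with
  | zero => simp
  | succ k ih =>
      rw [Finset.sum_range_succ, ih, pow_succ]
      have : 1 ≤ 2 ^ k := Nat.one_le_two_pow
      omega

lemma sum_bound (n : ℕ) (t : Fin n → Bool) :
    ∑ i : Fin n, 2 ^ (i : ℕ) * (t i).toNat < 2 ^ n := by
  have h1 : ∑ i : Fin n, 2 ^ (i : ℕ) * (t i).toNat ≤ ∑ i : Fin n, 2 ^ (i : ℕ) := by
    apply Finset.sum_le_sum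
    intro i _
    have : (t i).toNat ≤ 1 := by cases t i <;> simp
    nlinarith [Nat.one_le_two_pow (n := (i : ℕ))]
  have h2 : ∑ i : Fin n, 2 ^ (i : ℕ) = 2 ^ n - 1 := by
    rw [Fin.sum_univ_eq_sum_range]; exact sum_two_pow n
  have : 1 ≤ 2 ^ n := Nat.one_le_two_pow
  omega

lemma Rx_zero_ket0 : (Rx 0).mulVec ket0 = ket0 := by
  funext i
  fin_cases i <;> simp [Rx, ket0, mulVec, dotProduct, Fin.sum_univ_two]

lemma Rx_pi_ket0 : (Rx Real.pi).mulVec ket0 = ket1 := by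
  funext i
  fin_cases i <;>
    simp [Rx, ket0, ket1, mulVec, dotProduct, Fin.sum_univ_two, Real.cos_pi_div_two,
      Real.sin_pi_div_two]

theorem stmt_15 (n : ℕ) (hn : 1 ≤ n) (a b s : Fin n → Bool) (c : Bool)
    (hs : ∑ i : Fin n, 2 ^ (i : ℕ) * (s i).toNat =
      ((∑ i : Fin n, 2 ^ (i : ℕ) * (a i).toNat) +
        (∑ i : Fin n, 2 ^ (i : ℕ) * (b i).toNat)) % 2 ^ n)
    (hc : c = decide (2 ^ n ≤
      (∑ i : Fin n, 2 ^ (i : ℕ) * (a i).toNat) +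
        (∑ i : Fin n, 2 ^ (i : ℕ) * (b i).toNat))) :
    (∑ i : Fin n, (Real.pi / 2 ^ (n - (i : ℕ))) *
        (((a i).toNat : ℝ) + ((b i).toNat : ℝ) - ((s i).toNat : ℝ))
      = Real.pi * (c.toNat : ℝ)) ∧
    (Rx (∑ i : Fin n, (Real.pi / 2 ^ (n - (i : ℕ))) *
        (((a i).toNat : ℝ) + ((b i).toNat : ℝ) - ((s i).toNat : ℝ)))).mulVec ket0
      = emb c := by
  set A := ∑ i : Fin n, 2 ^ (i : ℕ) * (a i).toNat with hA
  set B := ∑ i : Fin n, 2 ^ (i : ℕ) * (b i).toNat with hB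
  have hAlt : A < 2 ^ n := sum_bound n a
  have hBlt : B < 2 ^ n := sum_bound n b
  -- nat identity: A + B = 2^n * c.toNat + S
  have hdiv : (A + B) / 2 ^ n = c.toNat := by
    rcases le_or_gt (2 ^ n) (A + B) with h | h
    · have h2 : A + B < 2 * 2 ^ n := by omega
      have : (A + B) / 2 ^ n = 1 := by
        apply Nat.div_eq_of_lt_le (by simpa using h)
        simpa [pow_succ, mul_comm] using h2
      simp [this, hc, h]
    · have : ¬ (2 ^ n ≤ A + B) := not_le.mpr h
      simp [hc, this, Nat.div_eq_of_lt h]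
  have hkey : A + B = 2 ^ n * c.toNat + ∑ i : Fin n, 2 ^ (i : ℕ) * (s i).toNat := by
    rw [hs, ← hdiv]
    exact (Nat.div_add_mod (A + B) (2 ^ n)).symm
  -- real sum computation
  have hsum : ∑ i : Fin n, (Real.pi / 2 ^ (n - (i : ℕ))) *
        (((a i).toNat : ℝ) + ((b i).toNat : ℝ) - ((s i).toNat : ℝ))
      = Real.pi * (c.toNat : ℝ) := by
    have hterm : ∀ i : Fin n, (Real.pi / 2 ^ (n - (i : ℕ))) *
        (((a i).toNat : ℝ) + ((b i).toNat : ℝ) - ((s i).toNat : ℝ))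
        = (Real.pi / 2 ^ n) * ((2 ^ (i : ℕ) * (a i).toNat : ℕ)
            + (2 ^ (i : ℕ) * (b i).toNat : ℕ) - ((2 ^ (i : ℕ) * (s i).toNat : ℕ) : ℝ)) := by
      intro i
      have hpow : (2 : ℝ) ^ (n - (i : ℕ)) * 2 ^ (i : ℕ) = 2 ^ n := by
        rw [← pow_add]
        congr 1
        omega
      have h1 : (2 : ℝ) ^ (n - (i : ℕ)) ≠ 0 := by positivity
      have h2 : (2 : ℝ) ^ n ≠ 0 := by positivity
      push_cast
      field_simp
      rw [← hpow]
      ring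
    rw [Finset.sum_congr rfl (fun i _ => hterm i), ← Finset.mul_sum]
    have : (∑ i : Fin n, ((2 ^ (i : ℕ) * (a i).toNat : ℕ)
            + (2 ^ (i : ℕ) * (b i).toNat : ℕ) - ((2 ^ (i : ℕ) * (s i).toNat : ℕ) : ℝ)))
        = (2 ^ n : ℝ) * c.toNat := by
      have hcast := congrArg (fun k : ℕ => (k : ℝ)) hkey
      push_cast [hA, hB] at hcast ⊢
      rw [Finset.sum_sub_distrib, Finset.sum_add_distrib]
      linarith
    rw [this]
    have h2 : (2 : ℝ) ^ n ≠ 0 := by positivity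
    field_simp
  refine ⟨hsum, ?_⟩
  rw [hsum]
  cases c with
  | false => simpa [emb] using Rx_zero_ket0
  | true => simpa [emb] using Rx_pi_ket0
end

section
/- For every n ≥ 1 and all bits x₁,…,x_n ∈ {0,1} (as real numbers), (π/2^{n−1})·x₁ + Σ_{l=2}^{n} (π/2^{n−l+1})·(x₁x₂⋯x_{l−1})·(2x_l − 1) = π·(x₁x₂⋯x_n). This telescoping angle identity is the correctness core of the paper's ancilla-free construction of the multiple-control Toffoli gate C^nNOT from controlled rotations. -/
open Matrix

theorem stmt_16 (n : ℕ) (hn : 1 ≤ n) (x : ℕ → ℝ)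
    (hx : ∀ i, 1 ≤ i → i ≤ n → x i = 0 ∨ x i = 1) :
    (Real.pi / 2 ^ (n - 1)) * x 1
        + ∑ l ∈ Finset.Icc 2 n,
            (Real.pi / 2 ^ (n - l + 1)) * (∏ j ∈ Finset.Icc 1 (l - 1), x j) * (2 * x l - 1)
      = Real.pi * ∏ i ∈ Finset.Icc 1 n, x i := by
  induction n with
  | zero => exact absurd hn (by omega)
  | succ m ih =>
    rcases Nat.eq_zero_or_pos m with hm | hm
    · subst hm
      simp
    · have h2 : 2 ≤ m + 1 := by omega
      rw [Finset.sum_Icc_succ_top h2, Finset.prod_Icc_succ_top (by omega : 1 ≤ m + 1)]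
      have key := ih hm (fun i h1 h2 => hx i h1 (by omega))
      have e1 : ∀ l ∈ Finset.Icc 2 m,
          (Real.pi / 2 ^ (m + 1 - l + 1)) * (∏ j ∈ Finset.Icc 1 (l - 1), x j) * (2 * x l - 1)
          = (1/2) * ((Real.pi / 2 ^ (m - l + 1)) * (∏ j ∈ Finset.Icc 1 (l - 1), x j)
              * (2 * x l - 1)) := by
        intro l hl
        simp only [Finset.mem_Icc] at hl
        have h : m + 1 - l + 1 = (m - l + 1) + 1 := by omega
        rw [h, pow_succ]
        ring
      rw [Finset.sum_congr rfl e1, ← Finset.mul_sum]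
      have e2 : m + 1 - (m + 1) + 1 = 1 := by omega
      have e3 : m + 1 - 1 = m := by omega
      have e4 : (2:ℝ) ^ m = 2 * 2 ^ (m - 1) := by
        rw [← pow_succ']
        congr 1
        omega
      rw [e2, e3, e4]
      linear_combination (1/2 : ℝ) * key
end
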